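/- For the triangle T_α = conv((0,0), ((α-1)/α, 1), ((α+1)/α, 1)) with α a positive integer, the constant coefficient of the rational Ehrhart quasi-polynomial satisfies Q_0(T_α, mα + k + r̃) = (1/α)(k(α - k - 2) + r̃^2 - 2r̃) + 1 for all integers m >= 0, integers 0 <= k < α and rationals 0 <= r̃ < 1. Consequently, sup_r Q_0(T_α, r) / Q_0(T_α, 0) → ∞ as α → ∞, so no bound |Q_0(P,r)| <= C·Q_0(P,0) with absolute constant C can hold for all rational polygons P. -/

import Mathlib

open Pointwise

/-- A point of `ℚⁿ` is a lattice point if all its coordinates are integers. -/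
def IsLatticePt {n : ℕ} (x : Fin n → ℚ) : Prop := ∀ i, ∃ z : ℤ, x i = (z : ℚ)

/-- The number of lattice points in the dilate `r • P`. -/
noncomputable def latticeCount {n : ℕ} (P : Set (Fin n → ℚ)) (r : ℚ) : ℕ :=
  Set.ncard {x | x ∈ r • P ∧ IsLatticePt x}

/-- A rational polytope: the convex hull of finitely many rational points. -/
def IsRatPolytope {n : ℕ} (P : Set (Fin n → ℚ)) : Prop :=
  ∃ V : Finset (Fin n → ℚ), P = convexHull ℚ (V : Set (Fin n → ℚ))

/-- The dimension of a set, as the dimension of its affine hull. -/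
noncomputable def polyDim {n : ℕ} (P : Set (Fin n → ℚ)) : ℕ :=
  Module.finrank ℚ (vectorSpan ℚ P)

/-- `F` is a face of the polytope `P`. -/
def IsFace {n : ℕ} (P F : Set (Fin n → ℚ)) : Prop :=
  F = P ∨ ∃ (f : (Fin n → ℚ) →ₗ[ℚ] ℚ) (c : ℚ),
    (∀ x ∈ P, f x ≤ c) ∧ F = {x | x ∈ P ∧ f x = c}

/-- `F` is an `i`-dimensional (nonempty) face of `P`. -/
def IsIFace {n : ℕ} (P F : Set (Fin n → ℚ)) (i : ℕ) : Prop :=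
  IsFace P F ∧ F.Nonempty ∧ polyDim F = i

/-- The dilated affine hull `r • aff(F)` contains a lattice point. -/
def DilAffHasLattice {n : ℕ} (F : Set (Fin n → ℚ)) (r : ℚ) : Prop :=
  ∃ x ∈ r • (affineSpan ℚ F : Set (Fin n → ℚ)), IsLatticePt x

/-- `k` is the `i`-index `d_i(P)`: the smallest positive integer such that
`k • aff(F)` contains a lattice point for every `i`-face `F` of `P`. -/
def IsIIndex {n : ℕ} (P : Set (Fin n → ℚ)) (i : ℕ) (k : ℕ) : Prop :=
  0 < k ∧ (∀ F, IsIFace P F i → DilAffHasLattice F (k : ℚ)) ∧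
    ∀ k' : ℕ, 0 < k' → (∀ F, IsIFace P F i → DilAffHasLattice F (k' : ℚ)) → k ≤ k'

/-- `q` is the rational `i`-index `rd_i(P)`: the smallest positive rational such that
`q • aff(F)` contains a lattice point for every `i`-face `F` of `P`. -/
def IsRatIIndex {n : ℕ} (P : Set (Fin n → ℚ)) (i : ℕ) (q : ℚ) : Prop :=
  0 < q ∧ (∀ F, IsIFace P F i → DilAffHasLattice F q) ∧
    ∀ q' : ℚ, 0 < q' → (∀ F, IsIFace P F i → DilAffHasLattice F q') → q ≤ q'

/-- An integral polytope: the convex hull of finitely many lattice points. -/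
def IsIntegralPolytope {n : ℕ} (P : Set (Fin n → ℚ)) : Prop :=
  ∃ V : Finset (Fin n → ℚ), (∀ v ∈ V, IsLatticePt v) ∧
    P = convexHull ℚ (V : Set (Fin n → ℚ))

/-- `q` is the rational denominator `q(P)`: the smallest positive rational such that
`q • P` is an integral polytope. -/
def IsRatDenom {n : ℕ} (P : Set (Fin n → ℚ)) (q : ℚ) : Prop :=
  0 < q ∧ IsIntegralPolytope (q • P) ∧
    ∀ q' : ℚ, 0 < q' → IsIntegralPolytope (q' • P) → q ≤ q'

/-- `f` is periodic with period `d`. -/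
def IsPeriodic (f : ℚ → ℚ) (d : ℚ) : Prop := ∀ r, f (r + d) = f r

/-- `Q` is a family of coefficient functions of the rational Ehrhart quasi-polynomial
of `P` (of degree `d`): each `Q i` is periodic with some positive period and
`#(rP ∩ ℤⁿ) = ∑_{i=0}^{d} Q_i(P,r) rⁱ` for all rational `r ≥ 0`. -/
def IsRatEhrhartCoeffs {n : ℕ} (P : Set (Fin n → ℚ)) (d : ℕ) (Q : ℕ → ℚ → ℚ) : Prop :=
  (∀ i, ∃ p : ℚ, 0 < p ∧ IsPeriodic (Q i) p) ∧
  ∀ r : ℚ, 0 ≤ r → (latticeCount P r : ℚ) = ∑ i ∈ Finset.range (d + 1), Q i r * r ^ i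

/-- `G` is the family of coefficient functions of the classical Ehrhart quasi-polynomial
of `P` (of degree `d`): each `G i` is periodic with some positive integer period and
`#(kP ∩ ℤⁿ) = ∑_{i=0}^{d} G_i(P,k) kⁱ` for all integers `k ≥ 0`. -/
def IsEhrhartCoeffs {n : ℕ} (P : Set (Fin n → ℚ)) (d : ℕ) (G : ℕ → ℕ → ℚ) : Prop :=
  (∀ i, ∃ p : ℕ, 0 < p ∧ ∀ k, G i (k + p) = G i k) ∧
  ∀ k : ℕ, (latticeCount P (k : ℚ) : ℚ) = ∑ i ∈ Finset.range (d + 1), G i k * (k : ℚ) ^ i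

/-- The triangle `T_α = conv((0,0), ((α-1)/α, 1), ((α+1)/α, 1))`. -/
def Talpha (α : ℕ) : Set (Fin 2 → ℚ) :=
  convexHull ℚ {![0, 0], ![((α : ℚ) - 1) / α, 1], ![((α : ℚ) + 1) / α, 1]}

namespace Stmt16Aux

lemma ineq_iff {α a b : ℤ} (hα : 0 < α) (hb : 0 ≤ b) :
    ((α - 1) * b ≤ α * a ∧ α * a ≤ (α + 1) * b) ↔ (b - b / α ≤ a ∧ a ≤ b + b / α) := by
  have hdm : α * (b / α) + b % α = b := Int.mul_ediv_add_emod b α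
  have h0 : 0 ≤ b % α := Int.emod_nonneg b hα.ne'
  have h1 : b % α < α := Int.emod_lt_of_pos b hα
  constructor
  · rintro ⟨h2, h3⟩
    constructor
    · by_contra hcon
      push_neg at hcon
      have hc : a + 1 ≤ b - b / α := hcon
      have := mul_le_mul_of_nonneg_left hc hα.le
      nlinarith
    · by_contra hcon
      push_neg at hcon
      have hc : b + b / α + 1 ≤ a := hcon
      have := mul_le_mul_of_nonneg_left hc hα.le
      nlinarith
  · rintro ⟨h2, h3⟩
    constructor
    · have := mul_le_mul_of_nonneg_left h2 hα.le
      nlinarith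
    · have := mul_le_mul_of_nonneg_left h3 hα.le
      nlinarith

lemma sum_eval {α : ℤ} (hα : 0 < α) :
    ∀ N : ℤ, 0 ≤ N → (∑ b ∈ Finset.Icc (0:ℤ) N, (2 * (b / α) + 1)) =
      α * (N / α) ^ 2 + 2 * (N / α) * (N % α + 1) + N % α + 1 := by
  intro N hN
  refine Int.le_induction (motive := fun N _ => (∑ b ∈ Finset.Icc (0:ℤ) N, (2 * (b / α) + 1)) = α * (N / α) ^ 2 + 2 * (N / α) * (N % α + 1) + N % α + 1) ?_ ?_ N hN
  · norm_num
  · intro N hN ih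
    have hins : Finset.Icc (0:ℤ) (N + 1) = insert (N + 1) (Finset.Icc 0 N) := by
      ext x; simp only [Finset.mem_Icc, Finset.mem_insert]; omega
    rw [hins, Finset.sum_insert (by simp), ih]
    have hdm : α * (N / α) + N % α = N := Int.mul_ediv_add_emod N α
    have h0 : 0 ≤ N % α := Int.emod_nonneg N hα.ne'
    have h1 : N % α < α := Int.emod_lt_of_pos N hα
    rcases lt_or_eq_of_le (by omega : N % α + 1 ≤ α) with hcase | hcase
    · have hrep : N + 1 = (N % α + 1) + α * (N / α) := by omega
      have e1 : (N + 1) / α = N / α := by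
        rw [hrep, Int.add_mul_ediv_left _ _ hα.ne', Int.ediv_eq_zero_of_lt (by omega) hcase, zero_add]
      have e2 : (N + 1) % α = N % α + 1 := by
        rw [hrep, Int.add_mul_emod_self_left, Int.emod_eq_of_lt (by omega) hcase]
      rw [e1, e2]; ring
    · have hrep : N + 1 = α * (N / α + 1) := by rw [mul_add, mul_one]; omega
      have e1 : (N + 1) / α = N / α + 1 := by rw [hrep, Int.mul_ediv_cancel_left _ hα.ne']
      have e2 : (N + 1) % α = 0 := by rw [hrep, Int.mul_emod_right]
      rw [e1, e2]
      have hs : N % α = α - 1 := by omega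
      rw [hs]; ring


lemma mem_Talpha {α : ℕ} (hα : 0 < α) (x : Fin 2 → ℚ) :
    x ∈ Talpha α ↔ 0 ≤ x 1 ∧ x 1 ≤ 1 ∧ ((α:ℚ) - 1) * x 1 ≤ (α:ℚ) * x 0 ∧
      (α:ℚ) * x 0 ≤ ((α:ℚ) + 1) * x 1 := by
  have hα' : (0:ℚ) < α := by exact_mod_cast hα
  have hαne : (α:ℚ) ≠ 0 := hα'.ne'
  have hv1 : (α:ℚ) * (((α:ℚ) - 1) / α) = (α:ℚ) - 1 := by field_simp
  have hv2 : (α:ℚ) * (((α:ℚ) + 1) / α) = (α:ℚ) + 1 := by field_simp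
  constructor
  · intro hx
    have hsub : Talpha α ⊆ {y : Fin 2 → ℚ | 0 ≤ y 1 ∧ y 1 ≤ 1 ∧ ((α:ℚ) - 1) * y 1 ≤ (α:ℚ) * y 0 ∧
        (α:ℚ) * y 0 ≤ ((α:ℚ) + 1) * y 1} := by
      apply convexHull_min
      · rintro v hv
        rcases hv with rfl | rfl | rfl
        · exact ⟨by norm_num, by norm_num, by norm_num, by norm_num⟩
        · refine ⟨by norm_num, by norm_num, ?_, ?_⟩ <;>
            simp only [Matrix.cons_val_zero, Matrix.cons_val_one, Matrix.head_cons, mul_one] <;>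
            rw [hv1] <;> linarith
        · refine ⟨by norm_num, by norm_num, ?_, ?_⟩ <;>
            simp only [Matrix.cons_val_zero, Matrix.cons_val_one, Matrix.head_cons, mul_one] <;>
            rw [hv2] <;> linarith
      · intro y hy z hz a b ha hb hab
        simp only [Set.mem_setOf_eq, Pi.add_apply, Pi.smul_apply, smul_eq_mul] at *
        obtain ⟨hy0, hy1, hy2, hy3⟩ := hy
        obtain ⟨hz0, hz1, hz2, hz3⟩ := hz
        refine ⟨by positivity, by nlinarith, ?_, ?_⟩
        · nlinarith [mul_le_mul_of_nonneg_left hy2 ha, mul_le_mul_of_nonneg_left hz2 hb]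
        · nlinarith [mul_le_mul_of_nonneg_left hy3 ha, mul_le_mul_of_nonneg_left hz3 hb]
    exact hsub hx
  · rintro ⟨h0, h1, h2, h3⟩
    by_cases hx1 : x 1 = 0
    · have hx0 : x 0 = 0 := by
        rw [hx1] at h2 h3
        nlinarith
      have hxeq : x = ![0, 0] := by
        funext i; fin_cases i <;> simp [hx0, hx1]
      rw [hxeq]
      exact subset_convexHull ℚ _ (Set.mem_insert _ _)
    · have hx1' : 0 < x 1 := lt_of_le_of_ne h0 (Ne.symm hx1)
      set u : ℚ := x 0 / x 1 with hu
      have hu1 : (α:ℚ) - 1 ≤ (α:ℚ) * u := by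
        rw [hu, ← mul_div_assoc, le_div_iff₀ hx1']
        linarith
      have hu2 : (α:ℚ) * u ≤ (α:ℚ) + 1 := by
        rw [hu, ← mul_div_assoc, div_le_iff₀ hx1']
        linarith
      set t : ℚ := (((α:ℚ) + 1) - (α:ℚ) * u) / 2 with hT
      have ht0 : 0 ≤ t := by rw [hT]; linarith
      have ht1 : t ≤ 1 := by rw [hT]; linarith
      have hw : (![u, 1] : Fin 2 → ℚ) ∈ Talpha α := by
        have hmem1 : ![((α:ℚ) - 1) / α, 1] ∈ Talpha α :=
          subset_convexHull ℚ _ (Set.mem_insert_of_mem _ (Set.mem_insert _ _))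
        have hmem2 : ![((α:ℚ) + 1) / α, 1] ∈ Talpha α :=
          subset_convexHull ℚ _ (Set.mem_insert_of_mem _ (Set.mem_insert_of_mem _ rfl))
        have hseg : (![u, 1] : Fin 2 → ℚ) ∈ segment ℚ (![((α:ℚ) - 1) / α, 1]) (![((α:ℚ) + 1) / α, 1]) := by
          refine ⟨t, 1 - t, ht0, by linarith, by ring, ?_⟩
          funext i; fin_cases i
          · simp only [Fin.zero_eta, Pi.add_apply, Pi.smul_apply, smul_eq_mul]
            simp
            rw [hT]
            field_simp
            ring
          · simp
        exact (convex_convexHull ℚ _).segment_subset hmem1 hmem2 hseg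
      have hv0 : (![0, 0] : Fin 2 → ℚ) ∈ Talpha α := subset_convexHull ℚ _ (Set.mem_insert _ _)
      have hseg2 : x ∈ segment ℚ (![0, 0] : Fin 2 → ℚ) (![u, 1]) := by
        refine ⟨1 - x 1, x 1, by linarith, h0, by ring, ?_⟩
        funext i; fin_cases i
        · simp
          rw [hu]
          field_simp
        · simp
      exact (convex_convexHull ℚ _).segment_subset hv0 hw hseg2


lemma mem_smul_Talpha {α : ℕ} (hα : 0 < α) {r : ℚ} (hr : 0 ≤ r) (x : Fin 2 → ℚ) :
    x ∈ r • Talpha α ↔ 0 ≤ x 1 ∧ x 1 ≤ r ∧ ((α:ℚ) - 1) * x 1 ≤ (α:ℚ) * x 0 ∧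
      (α:ℚ) * x 0 ≤ ((α:ℚ) + 1) * x 1 := by
  have hα' : (0:ℚ) < α := by exact_mod_cast hα
  rcases eq_or_lt_of_le hr with rfl | hr'
  · have hne : (Talpha α).Nonempty := ⟨![0,0], subset_convexHull ℚ _ (Set.mem_insert _ _)⟩
    rw [Set.zero_smul_set hne]
    constructor
    · intro h
      have hx : x = 0 := by simpa [Set.mem_zero] using h
      subst hx
      norm_num
    · rintro ⟨h0, h1, h2, h3⟩
      have hx1 : x 1 = 0 := le_antisymm h1 h0
      rw [hx1] at h2 h3
      have hx0 : x 0 = 0 := by nlinarith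
      have : x = 0 := by funext i; fin_cases i <;> simp [hx0, hx1]
      simp [this]
  · rw [Set.mem_smul_set_iff_inv_smul_mem₀ hr'.ne' _ _, mem_Talpha hα]
    simp only [Pi.smul_apply, smul_eq_mul, inv_mul_eq_div]
    constructor
    · rintro ⟨h0, h1, h2, h3⟩
      refine ⟨?_, (div_le_one hr').mp h1, ?_, ?_⟩
      · have := mul_nonneg h0 hr'.le
        rwa [div_mul_cancel₀ _ hr'.ne'] at this
      · rw [← mul_div_assoc, ← mul_div_assoc] at h2
        have := mul_le_mul_of_nonneg_right h2 hr'.le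
        rwa [div_mul_cancel₀ _ hr'.ne', div_mul_cancel₀ _ hr'.ne'] at this
      · rw [← mul_div_assoc, ← mul_div_assoc] at h3
        have := mul_le_mul_of_nonneg_right h3 hr'.le
        rwa [div_mul_cancel₀ _ hr'.ne', div_mul_cancel₀ _ hr'.ne'] at this
    · rintro ⟨h0, h1, h2, h3⟩
      refine ⟨div_nonneg h0 hr'.le, (div_le_one hr').mpr h1, ?_, ?_⟩
      · rw [← mul_div_assoc, ← mul_div_assoc]
        gcongr
      · rw [← mul_div_assoc, ← mul_div_assoc]
        gcongr

lemma count_eq {α : ℕ} (hα : 0 < α) {r : ℚ} (hr : 0 ≤ r) :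
    (latticeCount (Talpha α) r : ℤ) =
      (α:ℤ) * (⌊r⌋ / (α:ℤ)) ^ 2 + 2 * (⌊r⌋ / (α:ℤ)) * (⌊r⌋ % (α:ℤ) + 1) + ⌊r⌋ % (α:ℤ) + 1 := by
  have hαZ : 0 < (α:ℤ) := by exact_mod_cast hα
  have hN : 0 ≤ ⌊r⌋ := Int.floor_nonneg.mpr hr
  set N := ⌊r⌋ with hNdef
  set φ : ℤ × ℤ → (Fin 2 → ℚ) := fun p => ![(p.1 : ℚ), (p.2 : ℚ)] with hφ
  have hinj : Function.Injective φ := by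
    rintro ⟨a, b⟩ ⟨c, d⟩ h
    have h0 := congrFun h 0
    have h1 := congrFun h 1
    simp only [hφ, Matrix.cons_val_zero, Matrix.cons_val_one, Matrix.head_cons, Int.cast_inj] at h0 h1
    exact Prod.ext h0 h1
  set Bfin : Finset (ℤ × ℤ) :=
    (Finset.Icc (0:ℤ) N).biUnion
      (fun b => (Finset.Icc (b - b / (α:ℤ)) (b + b / (α:ℤ))).image (fun a => (a, b))) with hB
  have hmemB : ∀ p : ℤ × ℤ, p ∈ Bfin ↔
      (0 ≤ p.2 ∧ p.2 ≤ N ∧ p.2 - p.2 / (α:ℤ) ≤ p.1 ∧ p.1 ≤ p.2 + p.2 / (α:ℤ)) := by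
    rintro ⟨a, b⟩
    simp only [hB, Finset.mem_biUnion, Finset.mem_image, Finset.mem_Icc]
    constructor
    · rintro ⟨b', ⟨hb0, hbN⟩, a', ⟨hA, hB'⟩, heq⟩
      obtain ⟨rfl, rfl⟩ : a' = a ∧ b' = b := Prod.mk.injEq .. ▸ Prod.mk.injEq .. ▸ ⟨congrArg Prod.fst heq, congrArg Prod.snd heq⟩
      exact ⟨hb0, hbN, hA, hB'⟩
    · rintro ⟨hb0, hbN, hA, hB'⟩
      exact ⟨b, ⟨hb0, hbN⟩, a, ⟨hA, hB'⟩, rfl⟩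
  have hset : {x | x ∈ r • Talpha α ∧ IsLatticePt x} = ↑(Bfin.image φ) := by
    ext x
    simp only [Set.mem_setOf_eq, Finset.coe_image, Set.mem_image, Finset.mem_coe]
    constructor
    · rintro ⟨hxm, hlat⟩
      obtain ⟨a, ha⟩ := hlat 0
      obtain ⟨b, hb⟩ := hlat 1
      rw [mem_smul_Talpha hα hr] at hxm
      obtain ⟨h0, h1, h2, h3⟩ := hxm
      rw [hb] at h0 h1
      rw [ha] at h2 h3
      rw [hb] at h2 h3
      have hb0 : (0:ℤ) ≤ b := by exact_mod_cast h0
      have hbN : b ≤ N := by rw [hNdef]; exact Int.le_floor.mpr h1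
      have h2' : ((α:ℤ) - 1) * b ≤ (α:ℤ) * a := by exact_mod_cast h2
      have h3' : (α:ℤ) * a ≤ ((α:ℤ) + 1) * b := by exact_mod_cast h3
      obtain ⟨hA, hB'⟩ := (ineq_iff hαZ hb0).mp ⟨h2', h3'⟩
      refine ⟨(a, b), (hmemB (a, b)).mpr ⟨hb0, hbN, hA, hB'⟩, ?_⟩
      funext i; fin_cases i
      · simp [hφ, ha]
      · simp [hφ, hb]
    · rintro ⟨⟨a, b⟩, hmem, rfl⟩
      obtain ⟨hb0, hbN, hA, hB'⟩ := (hmemB (a, b)).mp hmem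
      obtain ⟨h2', h3'⟩ := (ineq_iff hαZ hb0).mpr ⟨hA, hB'⟩
      constructor
      · rw [mem_smul_Talpha hα hr]
        have e0 : φ (a, b) 0 = (a:ℚ) := by simp [hφ]
        have e1 : φ (a, b) 1 = (b:ℚ) := by simp [hφ]
        rw [e0, e1]
        refine ⟨by exact_mod_cast hb0, ?_, by exact_mod_cast h2', by exact_mod_cast h3'⟩
        calc (b:ℚ) ≤ (N:ℚ) := by exact_mod_cast hbN
          _ ≤ r := Int.floor_le r
      · intro i; fin_cases i
        · exact ⟨a, by simp [hφ]⟩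
        · exact ⟨b, by simp [hφ]⟩
  have hcount : latticeCount (Talpha α) r = (Bfin.image φ).card := by
    rw [latticeCount, hset, Set.ncard_coe_finset]
  have hdisj : ∀ b₁ ∈ Finset.Icc (0:ℤ) N, ∀ b₂ ∈ Finset.Icc (0:ℤ) N, b₁ ≠ b₂ →
      Disjoint ((Finset.Icc (b₁ - b₁ / (α:ℤ)) (b₁ + b₁ / (α:ℤ))).image (fun a => (a, b₁)))
        ((Finset.Icc (b₂ - b₂ / (α:ℤ)) (b₂ + b₂ / (α:ℤ))).image (fun a => (a, b₂))) := by
    intro b₁ _ b₂ _ hne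
    simp only [Finset.disjoint_left, Finset.mem_image]
    rintro ⟨a, c⟩ ⟨a₁, _, h₁⟩ ⟨a₂, _, h₂⟩
    apply hne
    have e₁ := congrArg Prod.snd h₁
    have e₂ := congrArg Prod.snd h₂
    simp at e₁ e₂
    rw [e₁, e₂]
  have hcard : (Bfin.card : ℤ) = ∑ b ∈ Finset.Icc (0:ℤ) N, (2 * (b / (α:ℤ)) + 1) := by
    rw [hB, Finset.card_biUnion hdisj, Nat.cast_sum]
    apply Finset.sum_congr rfl
    intro b hb
    have hb0 : 0 ≤ b := (Finset.mem_Icc.mp hb).1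
    have hdiv : 0 ≤ b / (α:ℤ) := Int.ediv_nonneg hb0 hαZ.le
    have hinja : Function.Injective (fun a : ℤ => (a, b)) := by
      intro a₁ a₂ h; exact congrArg Prod.fst h
    rw [Finset.card_image_of_injective _ hinja, Int.card_Icc]
    rw [show b + b / (α:ℤ) + 1 - (b - b / (α:ℤ)) = 2 * (b / (α:ℤ)) + 1 by ring]
    exact Int.toNat_of_nonneg (by omega)
  rw [hcount, Finset.card_image_of_injective _ hinj, hcard, sum_eval hαZ N hN]

def Qc (α : ℕ) : ℕ → ℚ → ℚ
  | 0, r => (((⌊r⌋ % (α:ℤ) : ℤ) : ℚ) * ((α:ℚ) - ((⌊r⌋ % (α:ℤ) : ℤ) : ℚ) - 2)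
      + (Int.fract r) ^ 2 - 2 * Int.fract r) / α + 1
  | 1, r => 2 * (1 - Int.fract r) / α
  | 2, _ => 1 / α
  | _ + 3, _ => 0

lemma Qc_periodic (α : ℕ) (i : ℕ) (j : ℤ) (r : ℚ) :
    Qc α i (r + (((α:ℤ) * j : ℤ) : ℚ)) = Qc α i r := by
  have hfr : Int.fract (r + (((α:ℤ) * j : ℤ) : ℚ)) = Int.fract r := Int.fract_add_intCast r _
  have hfl : ⌊r + (((α:ℤ) * j : ℤ) : ℚ)⌋ = ⌊r⌋ + (α:ℤ) * j := Int.floor_add_intCast r _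
  match i with
  | 0 => simp only [Qc, hfr, hfl, Int.add_mul_emod_self_left]
  | 1 => simp only [Qc, hfr]
  | 2 => rfl
  | n + 3 => rfl

lemma ehrhart_identity (α : ℕ) (hα : 0 < α) (r : ℚ) (hr : 0 ≤ r) :
    (latticeCount (Talpha α) r : ℚ) = ∑ i ∈ Finset.range 3, Qc α i r * r ^ i := by
  have hαQ : (0:ℚ) < α := by exact_mod_cast hα
  have hc := count_eq hα hr
  have hcQ : (latticeCount (Talpha α) r : ℚ) =
      (α:ℚ) * ((⌊r⌋ / (α:ℤ) : ℤ) : ℚ) ^ 2 + 2 * ((⌊r⌋ / (α:ℤ) : ℤ) : ℚ) * (((⌊r⌋ % (α:ℤ) : ℤ) : ℚ) + 1)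
        + ((⌊r⌋ % (α:ℤ) : ℤ) : ℚ) + 1 := by exact_mod_cast hc
  have hfloor : ((⌊r⌋ : ℤ) : ℚ) = (α:ℚ) * ((⌊r⌋ / (α:ℤ) : ℤ) : ℚ) + ((⌊r⌋ % (α:ℤ) : ℤ) : ℚ) := by
    exact_mod_cast congrArg (fun z : ℤ => (z : ℚ)) (Int.mul_ediv_add_emod ⌊r⌋ (α:ℤ)).symm
  have hr_eq : r = (α:ℚ) * ((⌊r⌋ / (α:ℤ) : ℤ) : ℚ) + ((⌊r⌋ % (α:ℤ) : ℤ) : ℚ) + Int.fract r := by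
    have h2 := Int.floor_add_fract r
    linarith [hfloor, h2]
  rw [hcQ, Finset.sum_range_succ, Finset.sum_range_succ, Finset.sum_range_one,
    pow_zero, pow_one, mul_one]
  simp only [Qc]
  set f : ℚ := Int.fract r with hf
  set q : ℚ := ((⌊r⌋ / (α:ℤ) : ℤ) : ℚ) with hq
  set s : ℚ := ((⌊r⌋ % (α:ℤ) : ℤ) : ℚ) with hs
  rw [show r = (α:ℚ) * q + s + f from hr_eq]
  field_simp
  ring

lemma periodic_int_mul {f : ℚ → ℚ} {p : ℚ} (h : IsPeriodic f p) :
    ∀ n : ℤ, 0 ≤ n → ∀ r, f (r + (n : ℚ) * p) = f r := by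
  intro n hn
  refine Int.le_induction (motive := fun n _ => ∀ r, f (r + (n : ℚ) * p) = f r) ?_ ?_ n hn
  · intro r; norm_num
  · intro n _ ih r
    have : r + ((n + 1 : ℤ) : ℚ) * p = (r + (n : ℚ) * p) + p := by push_cast; ring
    rw [this, h, ih]

lemma eval_Q0 {α : ℕ} (hα : 0 < α) {Q : ℕ → ℚ → ℚ} (hQ : IsRatEhrhartCoeffs (Talpha α) 2 Q)
    {r : ℚ} (hr : 0 ≤ r) : Q 0 r = Qc α 0 r := by
  obtain ⟨hper, hsum⟩ := hQ
  obtain ⟨p0, hp0, h0⟩ := hper 0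
  obtain ⟨p1, hp1, h1⟩ := hper 1
  obtain ⟨p2, hp2, h2⟩ := hper 2
  have hn0 : (0:ℤ) < p0.num := Rat.num_pos.mpr hp0
  have hn1 : (0:ℤ) < p1.num := Rat.num_pos.mpr hp1
  have hn2 : (0:ℤ) < p2.num := Rat.num_pos.mpr hp2
  set M : ℤ := p0.num * p1.num * p2.num with hM
  have hMpos : 0 < M := by positivity
  set qp : ℚ := (((α:ℤ) * M : ℤ) : ℚ) with hqp
  have hαZ : 0 < (α:ℤ) := by exact_mod_cast hα
  have hqpos : 0 < qp := by
    rw [hqp]; exact_mod_cast mul_pos hαZ hMpos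
  -- each Q i is periodic with period qp (and 2 * qp)
  have hmul : ∀ (p : ℚ), 0 < p → ∀ g : ℚ → ℚ, IsPeriodic g p →
      (∃ n : ℤ, 0 ≤ n ∧ (n : ℚ) * p = qp) → (∀ x, g (x + qp) = g x) ∧ (∀ x, g (x + 2 * qp) = g x) := by
    rintro p hp g hg ⟨n, hn, hnp⟩
    constructor
    · intro x; rw [← hnp]; exact periodic_int_mul hg n hn x
    · intro x
      have : x + 2 * qp = x + ((2 * n : ℤ) : ℚ) * p := by push_cast; rw [← hnp]; ring
      rw [this]; exact periodic_int_mul hg (2 * n) (by omega) x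
  have hden : ∀ p : ℚ, ((p.den : ℚ)) * p = (p.num : ℚ) := by
    intro p; rw [mul_comm]; exact_mod_cast Rat.mul_den_eq_num p
  have hex0 : ∃ n : ℤ, 0 ≤ n ∧ (n : ℚ) * p0 = qp := by
    refine ⟨(α:ℤ) * p0.den * p1.num * p2.num, by positivity, ?_⟩
    rw [hqp, hM]
    push_cast
    rw [show ((α:ℚ) * (p0.den:ℚ) * (p1.num:ℚ) * (p2.num:ℚ)) * p0
        = (α:ℚ) * ((p0.den:ℚ) * p0) * (p1.num:ℚ) * (p2.num:ℚ) by ring, hden p0]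
    ring
  have hex1 : ∃ n : ℤ, 0 ≤ n ∧ (n : ℚ) * p1 = qp := by
    refine ⟨(α:ℤ) * p0.num * p1.den * p2.num, by positivity, ?_⟩
    rw [hqp, hM]
    push_cast
    rw [show ((α:ℚ) * (p0.num:ℚ) * (p1.den:ℚ) * (p2.num:ℚ)) * p1
        = (α:ℚ) * ((p1.den:ℚ) * p1) * (p0.num:ℚ) * (p2.num:ℚ) by ring, hden p1]
    ring
  have hex2 : ∃ n : ℤ, 0 ≤ n ∧ (n : ℚ) * p2 = qp := by
    refine ⟨(α:ℤ) * p0.num * p1.num * p2.den, by positivity, ?_⟩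
    rw [hqp, hM]
    push_cast
    rw [show ((α:ℚ) * (p0.num:ℚ) * (p1.num:ℚ) * (p2.den:ℚ)) * p2
        = (α:ℚ) * ((p2.den:ℚ) * p2) * (p0.num:ℚ) * (p1.num:ℚ) by ring, hden p2]
    ring
  obtain ⟨hQ0a, hQ0b⟩ := hmul p0 hp0 (Q 0) h0 hex0
  obtain ⟨hQ1a, hQ1b⟩ := hmul p1 hp1 (Q 1) h1 hex1
  obtain ⟨hQ2a, hQ2b⟩ := hmul p2 hp2 (Q 2) h2 hex2
  -- Qc is periodic with qp and 2 qp
  have hQca : ∀ i x, Qc α i (x + qp) = Qc α i x := fun i x => Qc_periodic α i M x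
  have hQcb : ∀ i x, Qc α i (x + 2 * qp) = Qc α i x := by
    intro i x
    have : x + 2 * qp = x + (((α:ℤ) * (2 * M) : ℤ) : ℚ) := by rw [hqp]; push_cast; ring
    rw [this]; exact Qc_periodic α i (2 * M) x
  -- the three evaluation equations
  have hEq : ∀ t : ℚ, 0 ≤ t →
      Q 0 t + Q 1 t * t + Q 2 t * t ^ 2 = Qc α 0 t + Qc α 1 t * t + Qc α 2 t * t ^ 2 := by
    intro t ht
    have e1 := hsum t ht
    have e2 := ehrhart_identity α hα t ht
    rw [e1] at e2
    simpa [Finset.sum_range_succ, Finset.sum_range_one] using e2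
  have E0 := hEq r hr
  have E1 : Q 0 r + Q 1 r * (r + qp) + Q 2 r * (r + qp) ^ 2
      = Qc α 0 r + Qc α 1 r * (r + qp) + Qc α 2 r * (r + qp) ^ 2 := by
    have := hEq (r + qp) (by linarith)
    rwa [hQ0a, hQ1a, hQ2a, hQca, hQca, hQca] at this
  have E2 : Q 0 r + Q 1 r * (r + 2 * qp) + Q 2 r * (r + 2 * qp) ^ 2
      = Qc α 0 r + Qc α 1 r * (r + 2 * qp) + Qc α 2 r * (r + 2 * qp) ^ 2 := by
    have := hEq (r + 2 * qp) (by linarith)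
    rwa [hQ0b, hQ1b, hQ2b, hQcb, hQcb, hQcb] at this
  have hqne : qp ≠ 0 := hqpos.ne'
  have hc : Q 2 r = Qc α 2 r := by
    have h : (Q 2 r - Qc α 2 r) * (2 * qp ^ 2) = 0 := by linear_combination E0 - 2 * E1 + E2
    rcases mul_eq_zero.mp h with h | h
    · linarith
    · exact absurd h (by positivity)
  have hb : Q 1 r = Qc α 1 r := by
    have h : (Q 1 r - Qc α 1 r) * qp = 0 := by
      linear_combination E1 - E0 - (2 * r * qp + qp ^ 2) * hc
    rcases mul_eq_zero.mp h with h | h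
    · linarith
    · exact absurd h hqne
  linear_combination E0 - r * hb - r ^ 2 * hc

lemma part1 : ∀ α : ℕ, 0 < α → ∀ Q : ℕ → ℚ → ℚ, IsRatEhrhartCoeffs (Talpha α) 2 Q →
    ∀ m k : ℕ, k < α → ∀ rt : ℚ, 0 ≤ rt → rt < 1 →
      Q 0 ((m : ℚ) * α + k + rt) =
        (1 / (α : ℚ)) * ((k : ℚ) * ((α : ℚ) - k - 2) + rt ^ 2 - 2 * rt) + 1 := by
  intro α hα Q hQ m k hk rt h0 h1
  have hαQ : (0:ℚ) < α := by exact_mod_cast hα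
  have hr : (0:ℚ) ≤ (m : ℚ) * α + k + rt := by positivity
  rw [eval_Q0 hα hQ hr]
  have hsplit : (m : ℚ) * α + k + rt = (((m * α + k : ℕ) : ℤ) : ℚ) + rt := by push_cast; ring
  have hfloor : ⌊(m : ℚ) * α + k + rt⌋ = ((m * α + k : ℕ) : ℤ) := by
    rw [hsplit, add_comm, Int.floor_add_intCast, Int.floor_eq_zero_iff.mpr ⟨h0, h1⟩, zero_add]
  have hfract : Int.fract ((m : ℚ) * α + k + rt) = rt := by
    rw [hsplit, Int.fract_intCast_add, Int.fract_eq_self.mpr ⟨h0, h1⟩]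
  have hmod : (((m * α + k : ℕ) : ℤ)) % (α:ℤ) = (k : ℤ) := by
    push_cast
    rw [show ((m:ℤ) * α + k) = (k:ℤ) + (α:ℤ) * m by ring, Int.add_mul_emod_self_left,
      Int.emod_eq_of_lt (by positivity) (by exact_mod_cast hk)]
  simp only [Qc, hfloor, hfract, hmod]
  push_cast
  ring

end Stmt16Aux

/-- explicit formula for `Q₀(T_α, mα + k + r̃)`, and consequently the
constant coefficient of rational Ehrhart quasi-polynomials of rational polygons is
not bounded by any absolute constant multiple of its value at `0`. -/
theorem stmt16 :
    (∀ α : ℕ, 0 < α → ∀ Q : ℕ → ℚ → ℚ, IsRatEhrhartCoeffs (Talpha α) 2 Q →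
      ∀ m k : ℕ, k < α → ∀ rt : ℚ, 0 ≤ rt → rt < 1 →
        Q 0 ((m : ℚ) * α + k + rt) =
          (1 / (α : ℚ)) * ((k : ℚ) * ((α : ℚ) - k - 2) + rt ^ 2 - 2 * rt) + 1) ∧
    (∀ C : ℚ, ∃ α : ℕ, 0 < α ∧
      ∀ Q : ℕ → ℚ → ℚ, IsRatEhrhartCoeffs (Talpha α) 2 Q →
        ∃ r : ℚ, 0 ≤ r ∧ Q 0 r > C * Q 0 0) := by
  refine ⟨Stmt16Aux.part1, ?_⟩
  intro C
  set c : ℤ := max 1 ⌈C⌉ with hc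
  have hc1 : (1:ℤ) ≤ c := le_max_left _ _
  have hcC : C ≤ (c:ℚ) := by
    calc C ≤ (⌈C⌉ : ℚ) := Int.le_ceil C
      _ ≤ (c:ℚ) := by exact_mod_cast le_max_right 1 ⌈C⌉
  set t : ℕ := (4 * c).toNat with htdef
  have ht : (t:ℤ) = 4 * c := Int.toNat_of_nonneg (by linarith)
  have ht4 : (4:ℕ) ≤ t := by omega
  set α : ℕ := 2 * t + 2 with hαdef
  have hα : 0 < α := by omega
  refine ⟨α, hα, ?_⟩
  intro Q hQ
  have h00 : Q 0 0 = 1 := by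
    have h := Stmt16Aux.part1 α hα Q hQ 0 0 (by omega) 0 le_rfl one_pos
    simpa using h
  have hval := Stmt16Aux.part1 α hα Q hQ 0 t (by omega) 0 le_rfl one_pos
  refine ⟨((0:ℕ) : ℚ) * α + t + 0, by positivity, ?_⟩
  rw [hval, h00, mul_one]
  have htQ : (t:ℚ) = 4 * (c:ℚ) := by exact_mod_cast ht
  have hαQ : ((α:ℕ):ℚ) = 2 * (t:ℚ) + 2 := by rw [hαdef]; push_cast; ring
  have hc1Q : (1:ℚ) ≤ (c:ℚ) := by exact_mod_cast hc1
  rw [hαQ, htQ]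
  have hD : (0:ℚ) < 2 * (4 * (c:ℚ)) + 2 := by positivity
  rw [gt_iff_lt, ← sub_lt_iff_lt_add, one_div, inv_mul_eq_div, lt_div_iff₀ hD]
  nlinarith [hc1Q, hcC, mul_self_nonneg ((c:ℚ))]
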